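/- Let n ≥ 1, let b, c be units of W, and let h ∈ W((u)) be a Laurent series satisfying b·h ≡ c·φ(h) (mod p^n). Then h is congruent mod p^n to its coefficient h₀ in degree 0 (in particular every coefficient of h in nonzero degree is divisible by p^n). If moreover the reduction of h mod p is nonzero in k((u)), then h₀ is a unit of W. -/

import Mathlib

/-- The Frobenius-semilinear map `φ` on the Laurent series ring `W(k)((u))`, sending
`Σ wᵢ uⁱ` to `Σ F(wᵢ) u^{p·i}`, where `F = WittVector.frobenius`. -/
noncomputable def phiL (p : ℕ) [Fact p.Prime] {k : Type*} [CommRing k]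
    (g : HahnSeries ℤ (WittVector p k)) : HahnSeries ℤ (WittVector p k) where
  coeff := fun j => if (p : ℤ) ∣ j then WittVector.frobenius (g.coeff (j / p)) else 0
  isPWO_support' := by
    have hsub : (Function.support fun j : ℤ =>
        if (p : ℤ) ∣ j then WittVector.frobenius (g.coeff (j / p)) else 0) ⊆
        (fun i : ℤ => (p : ℤ) * i) '' g.support := by
      intro j hj
      simp only [Function.mem_support] at hj
      by_cases hd : (p : ℤ) ∣ j
      · refine ⟨j / p, ?_, Int.mul_ediv_cancel' hd⟩
        intro h0
        apply hj
        rw [if_pos hd, h0, map_zero]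
      · exact absurd (if_neg hd) hj
    have hmono : Monotone (fun i : ℤ => (p : ℤ) * i) := fun a b hab =>
      mul_le_mul_of_nonneg_left hab (Int.natCast_nonneg p)
    exact (g.isPWO_support.image_of_monotone hmono).mono hsub

/-- **Solutions of `b·h ≡ c·φ(h) (mod pⁿ)` in `W((u))` are constant.**
Let `W = W(k)` for `k` a perfect field of characteristic `p`, `n ≥ 1`, `b, c ∈ W^×`,
and let `h ∈ W((u))` satisfy `b·h ≡ c·φ(h) (mod pⁿ)` (coefficientwise).  Then `h` is
congruent mod `pⁿ` to its degree-`0` coefficient `h₀` (every coefficient in nonzero degree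
is divisible by `pⁿ`); and if moreover the reduction of `h` mod `p` is nonzero in `k((u))`
(some coefficient of `h` is not divisible by `p`), then `h₀` is a unit of `W`. -/
theorem semilinear_laurent_solution_constant
    (p n : ℕ) [Fact p.Prime] (hn : 1 ≤ n)
    (k : Type*) [Field k] [CharP k p] [PerfectRing k p]
    (b c : WittVector p k) (hb : IsUnit b) (hc : IsUnit c)
    (h : HahnSeries ℤ (WittVector p k))
    (hcong : ∀ j : ℤ, (p : WittVector p k) ^ n ∣
        (HahnSeries.single (0 : ℤ) b * h - HahnSeries.single (0 : ℤ) c * phiL p h).coeff j) :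
    (∀ j : ℤ, j ≠ 0 → (p : WittVector p k) ^ n ∣ h.coeff j) ∧
      ((∃ j : ℤ, ¬ (p : WittVector p k) ∣ h.coeff j) → IsUnit (h.coeff 0)) := by
  have hp2 : (2 : ℤ) ≤ (p : ℤ) := by exact_mod_cast (Fact.out : p.Prime).two_le
  have key : ∀ j : ℤ, (p : WittVector p k) ^ n ∣
      b * h.coeff j - c * (phiL p h).coeff j := by
    intro j
    have := hcong j
    simpa [HahnSeries.coeff_sub, HahnSeries.coeff_single_zero_mul] using this
  -- from divisibility of b * x, get divisibility of x
  have hbdvd : ∀ x : WittVector p k, (p : WittVector p k) ^ n ∣ b * x →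
      (p : WittVector p k) ^ n ∣ x := by
    intro x hx
    obtain ⟨u, hu⟩ := hb
    have : x = ↑u⁻¹ * (b * x) := by rw [← mul_assoc, ← hu, Units.inv_mul, one_mul]
    rw [this]
    exact hx.mul_left _
  have mainN : ∀ N : ℕ, ∀ j : ℤ, j.natAbs ≤ N → j ≠ 0 → (p : WittVector p k) ^ n ∣ h.coeff j := by
    intro N
    induction N with
    | zero => intro j hle hj0; exfalso; omega
    | succ N ih =>
    intro j hle hj0
    by_cases hd : (p : ℤ) ∣ j
    · obtain ⟨m, hm⟩ := hd
      have hd : (p : ℤ) ∣ j := ⟨m, hm⟩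
      have hp2' : 2 ≤ p := (Fact.out : p.Prime).two_le
      have hp0 : (p : ℤ) ≠ 0 := by omega
      have hdivj : j / (p : ℤ) = m := by rw [hm, Int.mul_ediv_cancel_left _ hp0]
      have hm0 : m ≠ 0 := by rintro rfl; rw [mul_zero] at hm; exact hj0 hm
      have hdiv : (p : WittVector p k) ^ n ∣ h.coeff (j / p) := by
        rw [hdivj]
        refine ih m ?_ hm0
        have h1 : j.natAbs = p * m.natAbs := by
          rw [hm, Int.natAbs_mul, Int.natAbs_natCast]
        have h2 : 1 ≤ m.natAbs := Int.natAbs_pos.mpr hm0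
        have h3 : 2 * m.natAbs ≤ p * m.natAbs := Nat.mul_le_mul_right _ hp2'
        omega
      have hF : (p : WittVector p k) ^ n ∣ WittVector.frobenius (h.coeff (j / p)) := by
        obtain ⟨y, hy⟩ := hdiv
        refine ⟨WittVector.frobenius y, ?_⟩
        have := congrArg WittVector.frobenius hy
        simpa using this
      have hphi : (phiL p h).coeff j = WittVector.frobenius (h.coeff (j / p)) := by
        simp [phiL, hd]
      have : (p : WittVector p k) ^ n ∣ b * h.coeff j := by
        have := key j
        rw [hphi] at this
        have h2 : (p : WittVector p k) ^ n ∣ c * WittVector.frobenius (h.coeff (j / p)) :=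
          hF.mul_left c
        simpa using dvd_add this h2
      exact hbdvd _ this
    · have hphi : (phiL p h).coeff j = 0 := by simp [phiL, hd]
      have := key j
      rw [hphi, mul_zero, sub_zero] at this
      exact hbdvd _ this
  have main : ∀ j : ℤ, j ≠ 0 → (p : WittVector p k) ^ n ∣ h.coeff j :=
    fun j hj => mainN j.natAbs j le_rfl hj
  refine ⟨main, ?_⟩
  rintro ⟨j, hjnd⟩
  have hj0 : j = 0 := by
    by_contra hne
    exact hjnd (dvd_trans (dvd_pow_self _ (by omega)) (main j hne))
  subst hj0
  have hne : h.coeff 0 ≠ 0 := by rintro h0; exact hjnd (h0 ▸ dvd_zero _)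
  obtain ⟨m, u, hu⟩ := WittVector.exists_eq_pow_p_mul' (h.coeff 0) hne
  cases m with
  | zero => rw [hu]; simpa using u.isUnit
  | succ m =>
    exfalso
    apply hjnd
    rw [hu]
    exact ⟨(p : WittVector p k) ^ m * ↑u, by ring⟩
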